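/- Let G be a finite simple graph, let P = v_0-v_1-…-v_p be a path of G with p odd, p ≥ 3, such that P has at most one chord, any chord of P is of the form v_{t-1}v_{t+1} with 0 < t < p-1, and neither v_0v_2 nor v_1v_3 is a chord of P. Let z be a vertex not on P adjacent to v_0, v_p and v_1 but not adjacent to v_2 (a near-obstruction of Type 4), and let r be the smallest integer with r ≥ 3 such that z is adjacent to v_r. Then the subgraph of G induced by {z, v_0, v_1, …, v_r} contains a Meyniel obstruction: if P has a chord v_{t-1}v_{t+1} with 2 < t < r, it is the cycle through z, v_1, …, v_r (an odd hole when r is odd, after deleting v_t; an odd cycle with only chord v_{t-1}v_{t+1} when r is even); otherwise, if r is odd then z, v_0, v_1, …, v_r induce an odd cycle whose only chord is zv_1, and if r is even then z, v_1, …, v_r induce a chordless odd cycle of length at least five. -/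

import Mathlib

open SimpleGraph

/-- The set of chords of a closed walk `c` in `G`: edges of `G` joining two
vertices of `c` that are not edges of `c` (i.e. not consecutive on `c`). -/
def SimpleGraph.cycleChords {V : Type*} (G : SimpleGraph V) {u : V} (c : G.Walk u u) :
    Set (Sym2 V) :=
  {e | e ∈ G.edgeSet ∧ (∀ x ∈ e, x ∈ c.support) ∧ e ∉ c.edges}


/-- `v i` and `v j` span a chord of the path `v 0 - v 1 - ⋯ - v p`: an edge of `G`
joining two non-consecutive vertices of the path (with `i < j`). -/
def SimpleGraph.IsPathChord {V : Type*} (G : SimpleGraph V) (p : ℕ) (v : ℕ → V)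
    (i j : ℕ) : Prop :=
  i + 2 ≤ j ∧ j ≤ p ∧ G.Adj (v i) (v j)


namespace Type4Aux

lemma mem_range1 {m s n : ℕ} : m ∈ List.range' s n ↔ s ≤ m ∧ m < s + n := by
  rw [List.mem_range']
  constructor
  · rintro ⟨i, hi, rfl⟩; omega
  · intro h; exact ⟨m - s, by omega, by omega⟩

lemma nodup_range1 : ∀ (n s : ℕ), (List.range' s n).Nodup
  | 0, s => by simp
  | n+1, s => by
    rw [List.range'_succ]
    exact List.nodup_cons.2 ⟨fun h => by have := mem_range1.1 h; omega, nodup_range1 n (s+1)⟩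

variable {V : Type*} {G : SimpleGraph V} {v : ℕ → V}

def rangeWalk (G : SimpleGraph V) (v : ℕ → V) :
    ∀ (a n : ℕ), (∀ i, a ≤ i → i < a + n → G.Adj (v i) (v (i+1))) → G.Walk (v a) (v (a + n))
  | _, 0, _ => Walk.nil
  | a, n+1, h =>
    (rangeWalk G v a n fun i h1 h2 => h i h1 (by omega)).concat (h (a+n) (by omega) (by omega))

@[simp] lemma rangeWalk_support (a n : ℕ) (h) :
    (rangeWalk G v a n h).support = (List.range' a (n+1)).map v := by
  induction n with
  | zero => simp [rangeWalk]
  | succ n ih => simp [rangeWalk, ih, List.range'_1_concat, List.concat_eq_append]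

@[simp] lemma rangeWalk_edges (a n : ℕ) (h) :
    (rangeWalk G v a n h).edges = (List.range' a n).map (fun i => s(v i, v (i+1))) := by
  induction n with
  | zero => simp [rangeWalk]
  | succ n ih =>
      simp only [rangeWalk, Walk.edges_concat, ih, List.range'_1_concat, List.concat_eq_append,
        List.map_append, List.map_cons, List.map_nil, List.append_cancel_left_eq, List.cons.injEq,
        and_true]
      rfl

@[simp] lemma rangeWalk_length (a n : ℕ) (h) :
    (rangeWalk G v a n h).length = n := by
  induction n with
  | zero => simp [rangeWalk]
  | succ n ih => simp [rangeWalk, ih]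

def pathW (G : SimpleGraph V) (v : ℕ → V) (a b : ℕ) (hab : a ≤ b)
    (h : ∀ i, a ≤ i → i < b → G.Adj (v i) (v (i+1))) : G.Walk (v a) (v b) :=
  (rangeWalk G v a (b - a) fun i h1 h2 => h i h1 (by omega)).copy rfl (congrArg v (by omega))

@[simp] lemma pathW_support (a b : ℕ) (hab : a ≤ b) (h) :
    (pathW G v a b hab h).support = (List.range' a (b - a + 1)).map v := by
  simp [pathW]

@[simp] lemma pathW_edges (a b : ℕ) (hab : a ≤ b) (h) :
    (pathW G v a b hab h).edges = (List.range' a (b - a)).map (fun i => s(v i, v (i+1))) := by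
  simp [pathW]

@[simp] lemma pathW_length (a b : ℕ) (hab : a ≤ b) (h) :
    (pathW G v a b hab h).length = b - a := by
  simp [pathW]

lemma build_cycle {a b z : V} (W : G.Walk a b) (hW : W.support.Nodup)
    (hzW : z ∉ W.support) (hab : a ≠ b) (hza : G.Adj z a) (hbz : G.Adj b z) :
    ∃ c : G.Walk z z, c.IsCycle ∧ c.length = W.length + 2 ∧
      c.support = z :: (W.support ++ [z]) ∧ c.edges = s(z, a) :: (W.edges ++ [s(b, z)]) := by
  have hzb : z ≠ b := fun h => hzW (h ▸ W.end_mem_support)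
  have hq : (W.concat hbz).IsPath := by
    rw [Walk.isPath_def, Walk.support_concat]
    rw [List.nodup_append]
    exact ⟨hW, List.nodup_singleton z, fun x hx y hy hxy => by
      rw [List.mem_singleton] at hy; subst hy; subst hxy; exact hzW hx⟩
  have hne : s(z, a) ∉ (W.concat hbz).edges := by
    rw [Walk.edges_concat, List.concat_eq_append]
    simp only [List.mem_append, List.mem_singleton]
    rintro (h | h)
    · exact hzW (W.fst_mem_support_of_mem_edges h)
    · rw [Sym2.eq_iff] at h
      rcases h with ⟨h1, _⟩ | ⟨_, h2⟩
      · exact hzb h1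
      · exact hab h2
  refine ⟨Walk.cons hza (W.concat hbz), (Walk.cons_isCycle_iff _ _).mpr ⟨hq, hne⟩, ?_, ?_, ?_⟩ <;>
    simp [Walk.support_concat, Walk.edges_concat, Walk.length_concat, List.concat_eq_append]






lemma supp_mem {z : V} {c : G.Walk z z} {L : List ℕ}
    (hsup : c.support = z :: (L.map v ++ [z])) :
    ∀ x, x ∈ c.support → x = z ∨ ∃ i, i ∈ L ∧ x = v i := by
  intro x hx
  rw [hsup] at hx
  simp only [List.mem_cons, List.mem_append, List.mem_map, List.mem_singleton] at hx
  rcases hx with rfl | ⟨⟨i, hi, rfl⟩ | (rfl | h)⟩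
  · exact Or.inl rfl
  · exact Or.inr ⟨i, hi, rfl⟩
  · exact Or.inl rfl
  · exact absurd h List.not_mem_nil

lemma supp_mem' {z : V} {c : G.Walk z z} {L : List ℕ}
    (hsup : c.support = z :: (L.map v ++ [z])) :
    ∀ i ∈ L, v i ∈ c.support := by
  intro i hi
  rw [hsup]
  simp only [List.mem_cons, List.mem_append, List.mem_map, List.mem_singleton]
  exact Or.inr (Or.inl ⟨i, hi, rfl⟩)

lemma support_set_eq {z : V} {c : G.Walk z z} {L : List ℕ} {S : Set ℕ}
    (hsup : c.support = z :: (L.map v ++ [z])) (hLS : ∀ i, i ∈ L ↔ i ∈ S) :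
    {x | x ∈ c.support} = insert z (v '' S) := by
  ext x
  simp only [Set.mem_setOf_eq, hsup, List.mem_cons, List.mem_append, List.mem_map,
    List.mem_singleton, Set.mem_insert_iff, Set.mem_image]
  constructor
  · rintro (rfl | ⟨⟨i, hi, rfl⟩ | (rfl | h)⟩)
    · exact Or.inl rfl
    · exact Or.inr ⟨i, (hLS i).1 hi, rfl⟩
    · exact Or.inl rfl
    · exact absurd h List.not_mem_nil
  · rintro (rfl | ⟨i, hi, rfl⟩)
    · exact Or.inl rfl
    · exact Or.inr (Or.inl ⟨i, (hLS i).2 hi, rfl⟩)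

lemma classify {z : V} {c : G.Walk z z} {L : List ℕ} {e₀ : Sym2 V}
    (hsup : c.support = z :: (L.map v ++ [z]))
    (hzv : ∀ i ∈ L, G.Adj z (v i) → s(z, v i) ∈ c.edges ∨ s(z, v i) = e₀)
    (hvv : ∀ i j, i ∈ L → j ∈ L → i < j → G.Adj (v i) (v j) →
      s(v i, v j) ∈ c.edges ∨ s(v i, v j) = e₀) :
    ∀ x y, G.Adj x y → x ∈ c.support → y ∈ c.support →
      s(x, y) ∈ c.edges ∨ s(x, y) = e₀ := by
  intro x y ha hx hy
  rcases supp_mem hsup x hx with rfl | ⟨i, hPi, rfl⟩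
  · rcases supp_mem hsup y hy with rfl | ⟨j, hPj, rfl⟩
    · exact absurd rfl ha.ne
    · exact hzv j hPj ha
  · rcases supp_mem hsup y hy with rfl | ⟨j, hPj, rfl⟩
    · have := hzv i hPi ha.symm
      rwa [Sym2.eq_swap] at this
    · rcases lt_trichotomy i j with h | h | h
      · exact hvv i j hPi hPj h ha
      · subst h; exact absurd rfl ha.ne
      · have := hvv j i hPj hPi h ha.symm
        rwa [Sym2.eq_swap] at this

lemma chords_eq_empty' {z : V} {c : G.Walk z z} {e₀ : Sym2 V}
    (h : ∀ x y, G.Adj x y → x ∈ c.support → y ∈ c.support →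
      s(x, y) ∈ c.edges ∨ s(x, y) = e₀)
    (he₀ : e₀ ∈ c.edges) :
    G.cycleChords c = ∅ := by
  ext e
  simp only [Set.mem_empty_iff_false, iff_false]
  refine Sym2.ind (fun x y => ?_) e
  rintro ⟨ha, hsup, hne⟩
  rw [SimpleGraph.mem_edgeSet] at ha
  rcases h x y ha (hsup x (Sym2.mem_mk_left x y)) (hsup y (Sym2.mem_mk_right x y)) with h' | h'
  · exact hne h'
  · exact hne (h' ▸ he₀)

lemma chords_eq_singleton {z : V} {c : G.Walk z z} {e₀ : Sym2 V}
    (h : ∀ x y, G.Adj x y → x ∈ c.support → y ∈ c.support →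
      s(x, y) ∈ c.edges ∨ s(x, y) = e₀)
    (he : e₀ ∈ G.cycleChords c) :
    G.cycleChords c = {e₀} := by
  ext e
  simp only [Set.mem_singleton_iff]
  constructor
  · refine Sym2.ind (fun x y => ?_) e
    rintro ⟨ha, hsup, hne⟩
    rw [SimpleGraph.mem_edgeSet] at ha
    rcases h x y ha (hsup x (Sym2.mem_mk_left x y)) (hsup y (Sym2.mem_mk_right x y)) with h' | h'
    · exact absurd h' hne
    · exact h'
  · rintro rfl; exact he



end Type4Aux

open Type4Aux List

/-- Near-obstruction of Type 4: `P = v 0 - ⋯ - v p` is a path with `p` odd, `p ≥ 3`,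
with at most one chord, any chord being `v (t-1) v (t+1)` with `0 < t < p - 1`, and
neither `v 0 v 2` nor `v 1 v 3` a chord; `z` is a vertex off `P` adjacent to `v 0`,
`v p` and `v 1` but not to `v 2`; `r` is the smallest integer `≥ 3` with `z` adjacent
to `v r`.  Then the subgraph induced by `{z, v 0, …, v r}` contains a Meyniel
obstruction, with the explicit case analysis: if `P` has a chord `v (t-1) v (t+1)`
with `2 < t < r`, the obstruction is the cycle through `z, v 1, …, v r` (an odd hole
after deleting `v t` when `r` is odd; an odd cycle with only chord `v (t-1) v (t+1)`
when `r` is even); otherwise, if `r` is odd then `z, v 0, …, v r` induce an odd cycle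
whose only chord is `z v 1`, and if `r` is even then `z, v 1, …, v r` induce a
chordless odd cycle of length at least five. -/
theorem type4_nearObstruction_meynielObstruction {V : Type*} [Fintype V]
    (G : SimpleGraph V) (p : ℕ) (v : ℕ → V) (z : V) (r : ℕ)
    (hodd : Odd p) (hp : 3 ≤ p) (hinj : Set.InjOn v (Set.Iic p))
    (hpath : ∀ i, i < p → G.Adj (v i) (v (i + 1)))
    (hshape : ∀ i j, G.IsPathChord p v i j → ∃ t, 0 < t ∧ t < p - 1 ∧ i = t - 1 ∧ j = t + 1)
    (hone : ∀ i j i' j', G.IsPathChord p v i j → G.IsPathChord p v i' j' → i = i' ∧ j = j')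
    (h02 : ¬ G.Adj (v 0) (v 2)) (h13 : ¬ G.Adj (v 1) (v 3))
    (hz : ∀ i, i ≤ p → z ≠ v i)
    (hz0 : G.Adj z (v 0)) (hzp : G.Adj z (v p))
    (hz1 : G.Adj z (v 1)) (hz2 : ¬ G.Adj z (v 2))
    (hr3 : 3 ≤ r) (hrp : r ≤ p) (hzr : G.Adj z (v r))
    (hrmin : ∀ i, 3 ≤ i → i < r → ¬ G.Adj z (v i)) :
    -- the subgraph induced by `{z, v 0, …, v r}` contains a Meyniel obstruction
    (∃ (u : V) (c : G.Walk u u), c.IsCycle ∧ Odd c.length ∧ 5 ≤ c.length ∧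
      (G.cycleChords c).ncard ≤ 1 ∧ ∀ x ∈ c.support, x ∈ insert z (v '' Set.Iic r)) ∧
    -- case: `P` has a chord `v (t-1) v (t+1)` with `2 < t < r`
    (∀ t, 2 < t → t < r → G.Adj (v (t - 1)) (v (t + 1)) →
      (Odd r → ∃ (u : V) (c : G.Walk u u), c.IsCycle ∧ Odd c.length ∧ 5 ≤ c.length ∧
        G.cycleChords c = ∅ ∧
        {x | x ∈ c.support} = insert z (v '' (Set.Icc 1 r \ {t}))) ∧
      (Even r → ∃ (u : V) (c : G.Walk u u), c.IsCycle ∧ Odd c.length ∧ 5 ≤ c.length ∧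
        G.cycleChords c = {s(v (t - 1), v (t + 1))} ∧
        {x | x ∈ c.support} = insert z (v '' Set.Icc 1 r))) ∧
    -- case: `P` has no chord `v (t-1) v (t+1)` with `2 < t < r`
    ((∀ t, 2 < t → t < r → ¬ G.Adj (v (t - 1)) (v (t + 1))) →
      (Odd r → ∃ (u : V) (c : G.Walk u u), c.IsCycle ∧ Odd c.length ∧ 5 ≤ c.length ∧
        G.cycleChords c = {s(z, v 1)} ∧
        {x | x ∈ c.support} = insert z (v '' Set.Iic r)) ∧
      (Even r → ∃ (u : V) (c : G.Walk u u), c.IsCycle ∧ Odd c.length ∧ 5 ≤ c.length ∧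
        G.cycleChords c = ∅ ∧
        {x | x ∈ c.support} = insert z (v '' Set.Icc 1 r))) := by
  have hvinj : ∀ i j, i ≤ p → j ≤ p → v i = v j → i = j := fun i j hi hj h => hinj hi hj h
  have hzne : ∀ i, i ≤ r → z ≠ v i := fun i hi => hz i (hi.trans hrp)
  have hvne : ∀ i j, i ≤ r → j ≤ r → i ≠ j → v i ≠ v j :=
    fun i j hi hj hij h => hij (hvinj i j (hi.trans hrp) (hj.trans hrp) h)
  have hzadj : ∀ i, i ≤ r → G.Adj z (v i) → i = 0 ∨ i = 1 ∨ i = r := by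
    intro i hi ha
    by_contra hcon
    push_neg at hcon
    obtain ⟨h0, h1, hr'⟩ := hcon
    have h2 : i ≠ 2 := fun h => hz2 (h ▸ ha)
    exact hrmin i (by omega) (by omega) ha
  have hchord : ∀ i j, i < j → j ≤ r → G.Adj (v i) (v j) →
      j = i + 1 ∨ (j = i + 2 ∧ 2 ≤ i) := by
    intro i j hij hjr ha
    rcases eq_or_lt_of_le (show i + 1 ≤ j by omega) with h | h
    · exact Or.inl h.symm
    · right
      obtain ⟨t, ht0, htp, hti, htj⟩ := hshape i j ⟨by omega, by omega, ha⟩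
      have hj2 : j = i + 2 := by omega
      subst hj2
      refine ⟨rfl, ?_⟩
      by_contra h2
      push_neg at h2
      interval_cases i
      · exact h02 ha
      · exact h13 ha
  -- case A : chord t exists, r odd
  have caseA : ∀ t, 2 < t → t < r → G.Adj (v (t - 1)) (v (t + 1)) → Odd r →
      ∃ (u : V) (c : G.Walk u u), c.IsCycle ∧ Odd c.length ∧ 5 ≤ c.length ∧
        G.cycleChords c = ∅ ∧
        {x | x ∈ c.support} = insert z (v '' (Set.Icc 1 r \ {t})) := by
    intro t ht2 htr hAdj hro
    have hr5 : 5 ≤ r := by obtain ⟨k, hk⟩ := hro; omega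
    set W : G.Walk (v 1) (v r) :=
      (pathW G v 1 (t-1) (by omega) (fun i _ h2 => hpath i (by omega))).append
        (Walk.cons hAdj (pathW G v (t+1) r (by omega) (fun i _ h2 => hpath i (by omega))))
      with hWdef
    have hsupW : W.support = (List.range' 1 (t-1) ++ List.range' (t+1) (r-t)).map v := by
      rw [hWdef, Walk.support_append, Walk.support_cons, List.tail_cons, pathW_support,
        pathW_support, show t-1-1+1 = t-1 by omega, show r-(t+1)+1 = r-t by omega,
        List.map_append]
    have hedgW : W.edges = (List.range' 1 (t-2)).map (fun i => s(v i, v (i+1))) ++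
        (s(v (t-1), v (t+1)) :: (List.range' (t+1) (r-t-1)).map (fun i => s(v i, v (i+1)))) := by
      rw [hWdef, Walk.edges_append, Walk.edges_cons, pathW_edges, pathW_edges,
        show t-1-1 = t-2 by omega, show r-(t+1) = r-t-1 by omega]
    have hlenW : W.length = r - 2 := by
      rw [hWdef, Walk.length_append, Walk.length_cons, pathW_length, pathW_length]; omega
    have hmemA : ∀ i, i ∈ List.range' 1 (t-1) ++ List.range' (t+1) (r-t) ↔
        1 ≤ i ∧ i ≤ r ∧ i ≠ t := by
      intro i; rw [List.mem_append, mem_range1, mem_range1]; omega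
    obtain ⟨c, hcyc, hlen, hsup, hedg⟩ := build_cycle (G := G) W
      (by rw [hsupW]
          refine List.Nodup.map_on ?_ ?_
          · intro x hx y hy hxy
            have hx' := (hmemA x).1 hx
            have hy' := (hmemA y).1 hy
            exact hvinj x y (by omega) (by omega) hxy
          · refine List.nodup_append.2 ⟨nodup_range1 _ _, nodup_range1 _ _, ?_⟩
            intro a ha b hb hab
            have := mem_range1.1 ha
            have := mem_range1.1 hb
            omega)
      (by rw [hsupW]
          intro hmem
          obtain ⟨i, hi, hiv⟩ := List.mem_map.1 hmem
          exact hzne i (by have := (hmemA i).1 hi; omega) hiv.symm)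
      (hvne 1 r (by omega) le_rfl (by omega))
      hz1 hzr.symm
    rw [hsupW] at hsup
    refine ⟨z, c, hcyc, ?_, ?_, ?_, ?_⟩
    · rw [hlen, hlenW, show r - 2 + 2 = r by omega]; exact hro
    · rw [hlen, hlenW]; omega
    · refine chords_eq_empty' (e₀ := s(z, v 1))
        (classify hsup ?_ ?_) (by rw [hedg]; exact List.mem_cons_self)
      · intro i hi hzi
        left
        have hi' := (hmemA i).1 hi
        rcases hzadj i (by omega) hzi with h0 | h1 | hr'
        · omega
        · subst h1; rw [hedg]; exact List.mem_cons_self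
        · subst hr'; rw [hedg]
          exact List.mem_cons_of_mem _ (List.mem_append_right _ (List.mem_singleton.2 Sym2.eq_swap))
      · intro i j hi hj hij ha
        left
        have hi' := (hmemA i).1 hi
        have hj' := (hmemA j).1 hj
        rw [hedg, hedgW]
        rcases hchord i j hij (by omega) ha with h1 | ⟨h2, hi2⟩
        · subst h1
          rcases Nat.lt_or_ge i t with hit | hit
          · -- i ≤ t - 2
            refine List.mem_cons_of_mem _ (List.mem_append_left _ (List.mem_append_left _
              (List.mem_map.2 ⟨i, mem_range1.2 ⟨by omega, by omega⟩, rfl⟩)))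
          · -- i ≥ t + 1
            refine List.mem_cons_of_mem _ (List.mem_append_left _ (List.mem_append_right _
              (List.mem_cons_of_mem _ (List.mem_map.2 ⟨i, mem_range1.2 ⟨by omega, by omega⟩, rfl⟩))))
        · subst h2
          obtain ⟨hieq, hjeq⟩ := hone i (i+2) (t-1) (t+1)
            ⟨by omega, by omega, ha⟩ ⟨by omega, by omega, hAdj⟩
          rw [show i + 2 = t + 1 by omega, hieq]
          exact List.mem_cons_of_mem _ (List.mem_append_left _ (List.mem_append_right _
            (List.mem_cons_self)))
    · refine support_set_eq hsup (fun i => ?_)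
      rw [hmemA]
      simp only [Set.mem_diff, Set.mem_Icc, Set.mem_singleton_iff]
      omega
  -- case B : chord t exists, r even
  have caseB : ∀ t, 2 < t → t < r → G.Adj (v (t - 1)) (v (t + 1)) → Even r →
      ∃ (u : V) (c : G.Walk u u), c.IsCycle ∧ Odd c.length ∧ 5 ≤ c.length ∧
        G.cycleChords c = {s(v (t - 1), v (t + 1))} ∧
        {x | x ∈ c.support} = insert z (v '' Set.Icc 1 r) := by
    intro t ht2 htr hAdj hre
    have hr4 : 4 ≤ r := by obtain ⟨k, hk⟩ := hre; omega
    obtain ⟨c, hcyc, hlen, hsup, hedg⟩ := build_cycle (G := G)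
      (pathW G v 1 r (by omega) (fun i _ h2 => hpath i (by omega)))
      (by rw [pathW_support, show r-1+1 = r by omega]
          refine List.Nodup.map_on ?_ (nodup_range1 _ _)
          intro x hx y hy hxy
          have hx' := mem_range1.1 hx
          have hy' := mem_range1.1 hy
          exact hvinj x y (by omega) (by omega) hxy)
      (by rw [pathW_support, show r-1+1 = r by omega]
          intro hmem
          obtain ⟨i, hi, hiv⟩ := List.mem_map.1 hmem
          exact hzne i (by have := mem_range1.1 hi; omega) hiv.symm)
      (hvne 1 r (by omega) le_rfl (by omega))
      hz1 hzr.symm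
    rw [pathW_support, show r-1+1 = r by omega] at hsup
    rw [pathW_edges] at hedg
    rw [pathW_length] at hlen
    refine ⟨z, c, hcyc, ?_, ?_, ?_, ?_⟩
    · rw [hlen, show r - 1 + 2 = r + 1 by omega]; exact hre.add_one
    · rw [hlen]; omega
    · refine chords_eq_singleton (classify hsup ?_ ?_) ?_
      · intro i hi hzi
        left
        have hi' := mem_range1.1 hi
        rcases hzadj i (by omega) hzi with h0 | h1 | hr'
        · omega
        · subst h1; rw [hedg]; exact List.mem_cons_self
        · subst hr'; rw [hedg]
          exact List.mem_cons_of_mem _ (List.mem_append_right _ (List.mem_singleton.2 Sym2.eq_swap))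
      · intro i j hi hj hij ha
        have hi' := mem_range1.1 hi
        have hj' := mem_range1.1 hj
        rcases hchord i j hij (by omega) ha with h1 | ⟨h2, hi2⟩
        · subst h1
          left
          rw [hedg]
          exact List.mem_cons_of_mem _ (List.mem_append_left _
            (List.mem_map.2 ⟨i, mem_range1.2 ⟨by omega, by omega⟩, rfl⟩))
        · subst h2
          right
          obtain ⟨hieq, hjeq⟩ := hone i (i+2) (t-1) (t+1)
            ⟨by omega, by omega, ha⟩ ⟨by omega, by omega, hAdj⟩
          rw [show i + 2 = t + 1 by omega, hieq]
      · -- s(v (t-1), v (t+1)) is a chord of c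
        refine ⟨hAdj, ?_, ?_⟩
        · intro x hx
          rcases Sym2.mem_iff.1 hx with rfl | rfl
          · exact supp_mem' hsup (t-1) (mem_range1.2 ⟨by omega, by omega⟩)
          · exact supp_mem' hsup (t+1) (mem_range1.2 ⟨by omega, by omega⟩)
        · rw [hedg]
          intro hmem
          rcases List.mem_cons.1 hmem with heq | hmem'
          · rw [Sym2.eq_iff] at heq
            rcases heq with ⟨h1, _⟩ | ⟨_, h2⟩
            · exact hzne (t-1) (by omega) h1.symm
            · exact hzne (t+1) (by omega) h2.symm
          rcases List.mem_append.1 hmem' with hmem'' | hlast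
          · obtain ⟨i, hi, hiv⟩ := List.mem_map.1 hmem''
            have hi' := mem_range1.1 hi
            rw [Sym2.eq_iff] at hiv
            rcases hiv with ⟨h1, h2⟩ | ⟨h1, h2⟩
            · have e1 := hvinj i (t-1) (by omega) (by omega) h1
              have e2 := hvinj (i+1) (t+1) (by omega) (by omega) h2
              omega
            · have e1 := hvinj i (t+1) (by omega) (by omega) h1
              have e2 := hvinj (i+1) (t-1) (by omega) (by omega) h2
              omega
          · rw [List.mem_singleton, Sym2.eq_iff] at hlast
            rcases hlast with ⟨h1, h2⟩ | ⟨h1, h2⟩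
            · exact hzne (t+1) (by omega) h2.symm
            · exact hzne (t-1) (by omega) h1.symm
    · refine support_set_eq hsup (fun i => ?_)
      rw [mem_range1]
      simp only [Set.mem_Icc]
      omega
  -- case C : no chord, r odd
  have caseC : (∀ t, 2 < t → t < r → ¬ G.Adj (v (t - 1)) (v (t + 1))) → Odd r →
      ∃ (u : V) (c : G.Walk u u), c.IsCycle ∧ Odd c.length ∧ 5 ≤ c.length ∧
        G.cycleChords c = {s(z, v 1)} ∧
        {x | x ∈ c.support} = insert z (v '' Set.Iic r) := by
    intro hno hro
    obtain ⟨c, hcyc, hlen, hsup, hedg⟩ := build_cycle (G := G)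
      (pathW G v 0 r (by omega) (fun i _ h2 => hpath i (by omega)))
      (by rw [pathW_support, show r-0+1 = r+1 by omega]
          refine List.Nodup.map_on ?_ (nodup_range1 _ _)
          intro x hx y hy hxy
          have hx' := mem_range1.1 hx
          have hy' := mem_range1.1 hy
          exact hvinj x y (by omega) (by omega) hxy)
      (by rw [pathW_support, show r-0+1 = r+1 by omega]
          intro hmem
          obtain ⟨i, hi, hiv⟩ := List.mem_map.1 hmem
          exact hzne i (by have := mem_range1.1 hi; omega) hiv.symm)
      (hvne 0 r (by omega) le_rfl (by omega))
      hz0 hzr.symm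
    rw [pathW_support, show r-0+1 = r+1 by omega] at hsup
    rw [pathW_edges, show r-0 = r by omega] at hedg
    rw [pathW_length] at hlen
    refine ⟨z, c, hcyc, ?_, ?_, ?_, ?_⟩
    · rw [hlen, show r - 0 + 2 = r + 2 by omega]
      obtain ⟨k, hk⟩ := hro; exact ⟨k+1, by omega⟩
    · rw [hlen]; omega
    · refine chords_eq_singleton (classify hsup ?_ ?_) ?_
      · intro i hi hzi
        have hi' := mem_range1.1 hi
        rcases hzadj i (by omega) hzi with h0 | h1 | hr'
        · subst h0; left; rw [hedg]; exact List.mem_cons_self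
        · subst h1; right; rfl
        · subst hr'; left; rw [hedg]
          exact List.mem_cons_of_mem _ (List.mem_append_right _ (List.mem_singleton.2 Sym2.eq_swap))
      · intro i j hi hj hij ha
        have hi' := mem_range1.1 hi
        have hj' := mem_range1.1 hj
        rcases hchord i j hij (by omega) ha with h1 | ⟨h2, hi2⟩
        · subst h1
          left
          rw [hedg]
          exact List.mem_cons_of_mem _ (List.mem_append_left _
            (List.mem_map.2 ⟨i, mem_range1.2 ⟨by omega, by omega⟩, rfl⟩))
        · subst h2
          have hx := hno (i+1) (by omega) (by omega)
          rw [show i+1-1 = i by omega, show i+1+1 = i+2 by omega] at hx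
          exact absurd ha hx
      · refine ⟨hz1, ?_, ?_⟩
        · intro x hx
          rcases Sym2.mem_iff.1 hx with rfl | rfl
          · rw [hsup]; exact List.mem_cons_self
          · exact supp_mem' hsup 1 (mem_range1.2 ⟨by omega, by omega⟩)
        · rw [hedg]
          intro hmem
          rcases List.mem_cons.1 hmem with heq | hmem'
          · rw [Sym2.eq_iff] at heq
            rcases heq with ⟨_, h2⟩ | ⟨h1, _⟩
            · exact hvne 1 0 (by omega) (by omega) (by omega) h2
            · exact hzne 0 (by omega) h1
          rcases List.mem_append.1 hmem' with hmem'' | hlast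
          · obtain ⟨i, hi, hiv⟩ := List.mem_map.1 hmem''
            have hi' := mem_range1.1 hi
            rw [Sym2.eq_iff] at hiv
            rcases hiv with ⟨h1, _⟩ | ⟨_, h2⟩
            · exact hzne i (by omega) h1.symm
            · exact hzne (i+1) (by omega) h2.symm
          · rw [List.mem_singleton, Sym2.eq_iff] at hlast
            rcases hlast with ⟨h1, _⟩ | ⟨_, h2⟩
            · exact hzne r (by omega) h1
            · exact hvne 1 r (by omega) (by omega) (by omega) h2
    · refine support_set_eq hsup (fun i => ?_)
      rw [mem_range1]
      simp only [Set.mem_Iic]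
      omega
  -- case D : no chord, r even
  have caseD : (∀ t, 2 < t → t < r → ¬ G.Adj (v (t - 1)) (v (t + 1))) → Even r →
      ∃ (u : V) (c : G.Walk u u), c.IsCycle ∧ Odd c.length ∧ 5 ≤ c.length ∧
        G.cycleChords c = ∅ ∧
        {x | x ∈ c.support} = insert z (v '' Set.Icc 1 r) := by
    intro hno hre
    have hr4 : 4 ≤ r := by obtain ⟨k, hk⟩ := hre; omega
    obtain ⟨c, hcyc, hlen, hsup, hedg⟩ := build_cycle (G := G)
      (pathW G v 1 r (by omega) (fun i _ h2 => hpath i (by omega)))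
      (by rw [pathW_support, show r-1+1 = r by omega]
          refine List.Nodup.map_on ?_ (nodup_range1 _ _)
          intro x hx y hy hxy
          have hx' := mem_range1.1 hx
          have hy' := mem_range1.1 hy
          exact hvinj x y (by omega) (by omega) hxy)
      (by rw [pathW_support, show r-1+1 = r by omega]
          intro hmem
          obtain ⟨i, hi, hiv⟩ := List.mem_map.1 hmem
          exact hzne i (by have := mem_range1.1 hi; omega) hiv.symm)
      (hvne 1 r (by omega) le_rfl (by omega))
      hz1 hzr.symm
    rw [pathW_support, show r-1+1 = r by omega] at hsup
    rw [pathW_edges] at hedg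
    rw [pathW_length] at hlen
    refine ⟨z, c, hcyc, ?_, ?_, ?_, ?_⟩
    · rw [hlen, show r - 1 + 2 = r + 1 by omega]; exact hre.add_one
    · rw [hlen]; omega
    · refine chords_eq_empty' (e₀ := s(z, v 1))
        (classify hsup ?_ ?_) (by rw [hedg]; exact List.mem_cons_self)
      · intro i hi hzi
        left
        have hi' := mem_range1.1 hi
        rcases hzadj i (by omega) hzi with h0 | h1 | hr'
        · omega
        · subst h1; rw [hedg]; exact List.mem_cons_self
        · subst hr'; rw [hedg]
          exact List.mem_cons_of_mem _ (List.mem_append_right _ (List.mem_singleton.2 Sym2.eq_swap))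
      · intro i j hi hj hij ha
        left
        have hi' := mem_range1.1 hi
        have hj' := mem_range1.1 hj
        rcases hchord i j hij (by omega) ha with h1 | ⟨h2, hi2⟩
        · subst h1
          rw [hedg]
          exact List.mem_cons_of_mem _ (List.mem_append_left _
            (List.mem_map.2 ⟨i, mem_range1.2 ⟨by omega, by omega⟩, rfl⟩))
        · subst h2
          have hx := hno (i+1) (by omega) (by omega)
          rw [show i+1-1 = i by omega, show i+1+1 = i+2 by omega] at hx
          exact absurd ha hx
    · refine support_set_eq hsup (fun i => ?_)
      rw [mem_range1]
      simp only [Set.mem_Icc]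
      omega
  have hsubs : ∀ (S : Set ℕ), S ⊆ Set.Iic r → ∀ (x : V),
      x ∈ insert z (v '' S) → x ∈ insert z (v '' Set.Iic r) := by
    rintro S hS x (rfl | ⟨i, hi, rfl⟩)
    · exact Set.mem_insert _ _
    · exact Set.mem_insert_of_mem _ ⟨i, hS hi, rfl⟩
  refine ⟨?_, fun t h1 h2 h3 => ⟨caseA t h1 h2 h3, caseB t h1 h2 h3⟩,
    fun hno => ⟨caseC hno, caseD hno⟩⟩
  by_cases hex : ∃ t, 2 < t ∧ t < r ∧ G.Adj (v (t-1)) (v (t+1))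
  · obtain ⟨t, h1, h2, h3⟩ := hex
    rcases Nat.even_or_odd r with hre | hro
    · obtain ⟨u, c, hc1, hc2, hc3, hc4, hc5⟩ := caseB t h1 h2 h3 hre
      refine ⟨u, c, hc1, hc2, hc3, by rw [hc4, Set.ncard_singleton], ?_⟩
      intro x hx
      have hx' : x ∈ insert z (v '' Set.Icc 1 r) := by rw [← hc5]; exact hx
      exact hsubs _ (fun i hi => hi.2) x hx'
    · obtain ⟨u, c, hc1, hc2, hc3, hc4, hc5⟩ := caseA t h1 h2 h3 hro
      refine ⟨u, c, hc1, hc2, hc3, by rw [hc4, Set.ncard_empty]; omega, ?_⟩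
      intro x hx
      have hx' : x ∈ insert z (v '' (Set.Icc 1 r \ {t})) := by rw [← hc5]; exact hx
      exact hsubs _ (fun i hi => hi.1.2) x hx'
  · push_neg at hex
    have hno : ∀ t, 2 < t → t < r → ¬ G.Adj (v (t-1)) (v (t+1)) := hex
    rcases Nat.even_or_odd r with hre | hro
    · obtain ⟨u, c, hc1, hc2, hc3, hc4, hc5⟩ := caseD hno hre
      refine ⟨u, c, hc1, hc2, hc3, by rw [hc4, Set.ncard_empty]; omega, ?_⟩
      intro x hx
      have hx' : x ∈ insert z (v '' Set.Icc 1 r) := by rw [← hc5]; exact hx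
      exact hsubs _ (fun i hi => hi.2) x hx'
    · obtain ⟨u, c, hc1, hc2, hc3, hc4, hc5⟩ := caseC hno hro
      refine ⟨u, c, hc1, hc2, hc3, by rw [hc4, Set.ncard_singleton], ?_⟩
      intro x hx
      have hx' : x ∈ insert z (v '' Set.Iic r) := by rw [← hc5]; exact hx
      exact hx'
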